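/- For any frame homomorphism f : L → M, the preimage of every strongly exact filter of M is a strongly exact filter of L. -/
import Mathlib


/-- A meet (of the set `S`) is strongly exact. -/
def IsStronglyExactMeet {L : Type*} [Order.Frame L] (S : Set L) : Prop :=
  ∀ y : L, (∀ x ∈ S, x ⇨ y = y) → sInf S ⇨ y = y

/-- A filter of a frame: contains ⊤, upward closed, closed under binary meets. -/
def IsFrameFilter {L : Type*} [Order.Frame L] (F : Set L) : Prop :=
  ⊤ ∈ F ∧ (∀ x ∈ F, ∀ y : L, x ≤ y → y ∈ F) ∧ ∀ x ∈ F, ∀ y ∈ F, x ⊓ y ∈ F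

/-- A strongly exact filter: a filter closed under strongly exact meets. -/
def IsStronglyExactFilter {L : Type*} [Order.Frame L] (F : Set L) : Prop :=
  IsFrameFilter F ∧ ∀ S : Set L, S ⊆ F → IsStronglyExactMeet S → sInf S ∈ F

/-- For any frame homomorphism, the preimage of a strongly exact filter is a
strongly exact filter. -/
theorem stmt13 {L M : Type*} [Order.Frame L] [Order.Frame M] (f : FrameHom L M)
    (G : Set M) (hG : IsStronglyExactFilter G) :
    IsStronglyExactFilter (f ⁻¹' G) := by
  obtain ⟨⟨htop, hup, hbin⟩, hse⟩ := hG
  refine ⟨⟨?_, ?_, ?_⟩, ?_⟩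
  · simp only [Set.mem_preimage, map_top]; exact htop
  · intro x hx y hxy
    exact hup _ hx _ (OrderHomClass.mono f hxy)
  · intro x hx y hy
    simp only [Set.mem_preimage, map_inf]
    exact hbin _ hx _ hy
  · intro S hS hSE
    set a := sInf S with ha
    -- Key: the hom image of a strongly exact meet "absorbs" implications.
    have key : ∀ y : M, (∀ x ∈ S, f x ⇨ y = y) → ∀ z : M, z ⊓ f a ≤ y → z ≤ y := by
      intro y hy z hz
      set y' : L := sSup {w : L | f w ⊓ z ≤ y} with hy'
      have hle : ∀ w : L, f w ⊓ z ≤ y → w ≤ y' := fun w h => le_sSup h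
      have hfy' : f y' ⊓ z ≤ y := by
        rw [hy', map_sSup, sSup_inf_eq]
        refine iSup₂_le fun b hb => ?_
        obtain ⟨w, hw, rfl⟩ := hb
        exact hw
      -- each x ∈ S satisfies x ⇨ y' = y'
      have h1 : ∀ x ∈ S, x ⇨ y' = y' := by
        intro x hx
        refine le_antisymm ?_ le_himp
        apply hle
        have h2 : f (x ⇨ y') ⊓ z ⊓ f x ≤ y := by
          have : f (x ⇨ y') ⊓ f x ≤ f y' := by
            rw [← map_inf]
            exact OrderHomClass.mono f himp_inf_le
          calc f (x ⇨ y') ⊓ z ⊓ f x = f (x ⇨ y') ⊓ f x ⊓ z := by ac_rfl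
            _ ≤ f y' ⊓ z := inf_le_inf_right z this
            _ ≤ y := hfy'
        have := le_himp_iff.mpr h2
        rwa [hy x hx] at this
      have h3 : a ⇨ y' = y' := hSE y' h1
      have h4 : a ≤ y' := hle a (by rwa [inf_comm] at hz)
      have h5 : y' = ⊤ := by rw [← h3, himp_eq_top_iff.mpr h4]
      have := hfy'
      rw [h5, map_top, top_inf_eq] at this
      exact this
    have key' : ∀ y : M, (∀ x ∈ S, f x ⇨ y = y) → f a ⇨ y = y := by
      intro y hy
      exact le_antisymm (key y hy _ himp_inf_le) le_himp
    have hfa_le : f a ≤ sInf (f '' S) := by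
      refine le_sInf fun b hb => ?_
      obtain ⟨x, hx, rfl⟩ := hb
      exact OrderHomClass.mono f (sInf_le hx)
    -- f '' S is a strongly exact meet in M
    have hSE' : IsStronglyExactMeet (f '' S) := by
      intro y hy
      have hyS : ∀ x ∈ S, f x ⇨ y = y := fun x hx => hy (f x) ⟨x, hx, rfl⟩
      refine le_antisymm ?_ le_himp
      calc sInf (f '' S) ⇨ y ≤ f a ⇨ y := himp_le_himp_right hfa_le
        _ = y := key' y hyS
    have hb : sInf (f '' S) ∈ G := by
      refine hse _ ?_ hSE'
      rintro b ⟨x, hx, rfl⟩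
      exact hS hx
    -- sInf (f '' S) ≤ f a
    have hle2 : sInf (f '' S) ≤ f a := by
      set b := sInf (f '' S)
      have hy0 : ∀ x ∈ S, f x ⇨ (b ⇨ f a) = b ⇨ f a := by
        intro x hx
        rw [himp_himp, inf_eq_right.mpr (sInf_le (Set.mem_image_of_mem f hx))]
      have := key' (b ⇨ f a) hy0
      have htop' : f a ⇨ (b ⇨ f a) = ⊤ := himp_eq_top_iff.mpr le_himp
      rw [htop'] at this
      exact himp_eq_top_iff.mp this.symm
    exact hup _ hb _ hle2
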